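/- Suppose M is a transitive model of ATR₀^set plus V=L plus the complete theory Th(L_γ), where every element of L_γ is parameter-free definable in L_γ. Then M = L_δ for some δ ≥ γ. -/

import Mathlib

open FirstOrder Language

namespace BetaRank

abbrev ZFS : Type 1 := ZFSet.{0}
abbrev Ord0 : Type 1 := Ordinal.{0}

abbrev Sent : Type := Language.graph.Sentence
abbrev Fml (n : ℕ) : Type := Language.graph.Formula (Fin n)

/-- The ∈-structure on a class (set) of ZF sets. -/
def structC (A : Set ZFS) : Language.graph.Structure ↥A where
  RelMap | .adj => fun x => (x 0).1 ∈ (x 1).1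

/-- Satisfaction of a sentence in a class of ZF sets with the true membership relation. -/
def SatC (A : Set ZFS) (σ : Sent) : Prop :=
  @Sentence.Realize Language.graph ↥A (structC A) σ

/-- Satisfaction of a theory. -/
def SatT (A : Set ZFS) (T : Set Sent) : Prop := ∀ σ ∈ T, SatC A σ

/-- The complete first-order theory of a class of ZF sets. -/
def ThC (A : Set ZFS) : Set Sent := { σ | SatC A σ }

/-- Realization of a formula with free variables in a class of ZF sets. -/
def FRealize (A : Set ZFS) {n : ℕ} (φ : Fml n) (v : Fin n → ↥A) : Prop :=
  @Formula.Realize Language.graph ↥A (structC A) _ φ v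

/-- Realization of a bounded formula (all variables among the `n` bound slots). -/
def BRealize (A : Set ZFS) {n : ℕ} (φ : Language.graph.BoundedFormula Empty n)
    (xs : Fin n → ↥A) : Prop :=
  @BoundedFormula.Realize Language.graph ↥A (structC A) _ _ φ Empty.elim xs

/-- Satisfaction over (the members of) a single ZF set with the true membership relation. -/
def SatZ (M : ZFS) (σ : Sent) : Prop := SatC M.toSet σ

def SatZT (M : ZFS) (T : Set Sent) : Prop := ∀ σ ∈ T, SatZ M σ

/-- A transitive (set) model of a theory: the formal rendering of a β-model of set theory. -/
def TransModel (M : ZFS) (T : Set Sent) : Prop := M.IsTransitive ∧ SatZT M T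

/-- The first-order definable subsets (with parameters) of a class of ZF sets. -/
def defSub (A : Set ZFS) : Set ZFS :=
  { y | (∀ z ∈ y, z ∈ A) ∧ ∃ (k : ℕ) (φ : Fml (k + 1)) (p : Fin k → ↥A),
      ∀ z : ZFS, z ∈ y ↔ ∃ h : z ∈ A, FRealize A φ (Fin.cons ⟨z, h⟩ p) }

/-- The constructible hierarchy, as classes of ZF sets. -/
noncomputable def Lv (α : Ord0) : Set ZFS :=
  Ordinal.limitRecOn α ∅ (fun _ ih => defSub ih)
    (fun o _ ih => { x | ∃ β, ∃ h : β < o, x ∈ ih β h })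

/-- The class L of constructible sets. -/
noncomputable def Lclass : Set ZFS := { x | ∃ α, x ∈ Lv α }

/-- `A` is a fully elementary subclass of `B` (with respect to ∈). -/
def ElemIn (A B : Set ZFS) : Prop :=
  A ⊆ B ∧ ∀ (n : ℕ) (φ : Fml n) (v : Fin n → ZFS) (hA : ∀ i, v i ∈ A) (hB : ∀ i, v i ∈ B),
    FRealize A φ (fun i => ⟨v i, hA i⟩) ↔ FRealize B φ (fun i => ⟨v i, hB i⟩)

/-- `σ̂(α)`: the least `σ` with `L_σ ≺ L_α`. -/
noncomputable def sigmaHat (α : Ord0) : Ord0 := sInf { σ | ElemIn (Lv σ) (Lv α) }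

/-- Δ₀ (bounded) formulas in the language of set theory. -/
inductive IsDelta0 : ∀ {α : Type} {n : ℕ}, Language.graph.BoundedFormula α n → Prop
  | falsum {α n} : IsDelta0 (BoundedFormula.falsum : Language.graph.BoundedFormula α n)
  | equal {α n} (t u : Language.graph.Term (α ⊕ Fin n)) : IsDelta0 (Term.bdEqual t u)
  | rel {α n l} (R : Language.graph.Relations l)
      (ts : Fin l → Language.graph.Term (α ⊕ Fin n)) : IsDelta0 (BoundedFormula.rel R ts)
  | imp {α n} {φ ψ : Language.graph.BoundedFormula α n} :
      IsDelta0 φ → IsDelta0 ψ → IsDelta0 (φ.imp ψ)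
  | ball {α n} (t : Language.graph.Term (α ⊕ Fin n))
      {φ : Language.graph.BoundedFormula α (n + 1)} : IsDelta0 φ →
      IsDelta0 ((BoundedFormula.imp
        (Language.adj.boundedFormula₂ (Term.var (Sum.inr (Fin.last n))) (t.liftAt 1 n)) φ).all)

/-- Σ₁ formulas: existential quantifiers in front of a Δ₀ matrix. -/
inductive IsSigma1 : ∀ {α : Type} {n : ℕ}, Language.graph.BoundedFormula α n → Prop
  | of_delta0 {α n} {φ : Language.graph.BoundedFormula α n} : IsDelta0 φ → IsSigma1 φ
  | ex {α n} {φ : Language.graph.BoundedFormula α (n + 1)} : IsSigma1 φ → IsSigma1 φ.ex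

/-- Δ₀-collection holds in the class `A`. -/
def Delta0Collection (A : Set ZFS) : Prop :=
  ∀ (n : ℕ) (φ : Language.graph.BoundedFormula Empty (n + 2)), IsDelta0 φ →
    ∀ (p : Fin n → ↥A) (a : ↥A),
      (∀ x : ↥A, x.1 ∈ a.1 → ∃ y : ↥A, BRealize A φ (Fin.snoc (Fin.snoc p x) y)) →
      ∃ b : ↥A, ∀ x : ↥A, x.1 ∈ a.1 →
        ∃ y : ↥A, y.1 ∈ b.1 ∧ BRealize A φ (Fin.snoc (Fin.snoc p x) y)

/-- Full first-order collection holds in the class `A`. -/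
def FullCollection (A : Set ZFS) : Prop :=
  ∀ (n : ℕ) (φ : Language.graph.BoundedFormula Empty (n + 2)),
    ∀ (p : Fin n → ↥A) (a : ↥A),
      (∀ x : ↥A, x.1 ∈ a.1 → ∃ y : ↥A, BRealize A φ (Fin.snoc (Fin.snoc p x) y)) →
      ∃ b : ↥A, ∀ x : ↥A, x.1 ∈ a.1 →
        ∃ y : ↥A, y.1 ∈ b.1 ∧ BRealize A φ (Fin.snoc (Fin.snoc p x) y)

/-- An ordinal is admissible iff it is a limit and `L_α` satisfies Δ₀-collection. -/
def AdmissibleOrd (α : Ord0) : Prop := Order.IsSuccLimit α ∧ Delta0Collection (Lv α)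

/-- `ξ` is a limit of admissible ordinals. -/
def LimitOfAdmissibles (ξ : Ord0) : Prop :=
  0 < ξ ∧ ∀ γ < ξ, ∃ δ, γ < δ ∧ δ < ξ ∧ AdmissibleOrd δ

/-- `ξ` is locally countable: `L_ξ` satisfies "every set is countable". -/
def LocCtbl (ξ : Ord0) : Prop :=
  ∀ x ∈ Lv ξ, ∃ f ∈ Lv ξ, ZFSet.IsFunc x ZFSet.omega f ∧
    ∀ z w u : ZFS, z.pair u ∈ f → w.pair u ∈ f → z = w

/-- Every element of `A` is definable in `(A, ∈)` without parameters. -/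
def PointwiseDefinable (A : Set ZFS) : Prop :=
  ∀ x : ↥A, ∃ φ : Fml 1, ∀ y : ↥A, FRealize A φ ![y] ↔ y = x

/-- A set is (like) a von Neumann ordinal. -/
def IsVN (x : ZFS) : Prop := x.IsOrdinal

/-- The von Neumann natural numbers as ZF sets. -/
def numZF : ℕ → ZFS := fun n => Nat.rec ∅ (fun _ ih => insert ih ih) n

/-- f is a set of ordered pairs which is single-valued. -/
def IsFunLike (f : ZFS) : Prop :=
  (∀ p ∈ f, ∃ x y : ZFS, p = x.pair y) ∧
    ∀ x y₁ y₂ : ZFS, x.pair y₁ ∈ f → x.pair y₂ ∈ f → y₁ = y₂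

/-- `x` is in the field of the relation `r`. -/
def InFld (r x : ZFS) : Prop := ∃ y : ZFS, x.pair y ∈ r ∨ y.pair x ∈ r

/-- `f` is the Mostowski collapsing function of the relation `r`:
`dom f = field r` and `f(x) = { f(y) : (y,x) ∈ r }`. -/
def IsCollapsing (f r : ZFS) : Prop :=
  IsFunLike f ∧ (∀ x : ZFS, (∃ y, x.pair y ∈ f) ↔ InFld r x) ∧
    ∀ x v : ZFS, x.pair v ∈ f → ∀ b : ZFS, b ∈ v ↔ ∃ y : ZFS, y.pair x ∈ r ∧ y.pair b ∈ f

/-- `r` is a regular relation from the point of view of `M`: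
every nonempty set in `M` has an `r`-minimal element. -/
def RegularIn (M r : ZFS) : Prop :=
  ∀ u ∈ M, u ≠ ∅ → ∃ x ∈ u, ∀ y ∈ u, y.pair x ∉ r

/-- The axiom Beta holds in `M`: every regular relation in `M` has a collapsing function in `M`. -/
def BetaIn (M : ZFS) : Prop := ∀ r ∈ M, RegularIn M r → ∃ f ∈ M, IsCollapsing f r

/-- An `L_∈`-structure coded by a pair of ZF sets (domain, membership relation). -/
def structP (m e : ZFS) : Language.graph.Structure ↥m.toSet where
  RelMap | .adj => fun x => ZFSet.pair (x 0).1 (x 1).1 ∈ e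

def SatP (m e : ZFS) (T : Set Sent) : Prop :=
  ∀ σ ∈ T, @Sentence.Realize Language.graph ↥m.toSet (structP m e) σ

/-- The pair `(m, e)` is a well-founded `L_∈`-structure. -/
def WFPair (m e : ZFS) : Prop :=
  (∀ p ∈ e, ∃ x ∈ m, ∃ y ∈ m, p = x.pair y) ∧
    WellFounded (fun x y : ↥m.toSet => ZFSet.pair x.1 y.1 ∈ e)

/-- A well-founded coded model of the theory `T`. -/
def WFModelP (m e : ZFS) (T : Set Sent) : Prop := WFPair m e ∧ SatP m e T



/-! ### Auxiliary development -/

section Aux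

/-- Transitivity for classes of ZF sets. -/
def TransC (A : Set ZFS) : Prop := ∀ x ∈ A, ∀ z ∈ x, z ∈ A

/-! #### ZF ordinal facts -/

lemma no3cycle : ∀ a b c : ZFSet, a ∈ b → b ∈ c → c ∈ a → False := by
  intro a
  induction a using (ZFSet.mem_wf.induction) with
  | _ a IH =>
    intro b c hab hbc hca
    exact IH c hca a b hca hab hbc

lemma isOrdinal_mem {x y : ZFSet} (hx : x.IsOrdinal) (hy : y ∈ x) : y.IsOrdinal := by
  constructor
  · intro a ha b hb
    exact hx.mem_trans' hb ha hy
  · intro u v w huv hvw hwy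
    have hwx : w ∈ x := hx.mem_trans hwy hy
    exact hx.mem_trans' huv hvw hwx

lemma ord_trichotomy : ∀ x y : ZFSet, x.IsOrdinal → y.IsOrdinal →
    x ∈ y ∨ x = y ∨ y ∈ x := by
  intro x
  induction x using (ZFSet.mem_wf.induction) with
  | _ x IHx =>
    intro y
    induction y using (ZFSet.mem_wf.induction) with
    | _ y IHy =>
      intro hx hy
      by_cases hxy : x ∈ y
      · exact Or.inl hxy
      by_cases hxy2 : x = y
      · exact Or.inr (Or.inl hxy2)
      right; right
      have hysub : ∀ y' ∈ y, y' ∈ x := by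
        intro y' hy'
        rcases IHy y' hy' hx (isOrdinal_mem hy hy') with h | h | h
        · exact absurd (hy.mem_trans h hy') hxy
        · exact absurd (h ▸ hy') hxy
        · exact h
      have : ¬ (∀ x' ∈ x, x' ∈ y) := by
        intro hall
        exact hxy2 (ZFSet.ext fun z => ⟨fun h => hall z h, fun h => hysub z h⟩)
      push_neg at this
      obtain ⟨x', hx'x, hx'y⟩ := this
      rcases IHx x' hx'x y (isOrdinal_mem hx hx'x) hy with h | h | h
      · exact absurd h hx'y
      · exact h ▸ hx'x
      · exact hx.mem_trans h hx'x

lemma isOrdinal_iff' {x : ZFSet} : x.IsOrdinal ↔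
    (x.IsTransitive ∧ ∀ y ∈ x, ∀ z ∈ x, y ∈ z ∨ z ∈ y ∨ y = z) := by
  constructor
  · intro h
    refine ⟨h.isTransitive, fun y hy z hz => ?_⟩
    rcases ord_trichotomy y z (isOrdinal_mem h hy) (isOrdinal_mem h hz) with h1 | h1 | h1
    · exact Or.inl h1
    · exact Or.inr (Or.inr h1)
    · exact Or.inr (Or.inl h1)
  · rintro ⟨htr, htri⟩
    constructor
    · exact htr
    · intro y z w hyz hzw hwx
      have hzx : z ∈ x := htr.mem_trans hzw hwx
      have hyx : y ∈ x := htr.mem_trans hyz hzx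
      rcases htri y hyx w hwx with h | h | h
      · exact h
      · exact (no3cycle y z w hyz hzw h).elim
      · subst h; exact (ZFSet.mem_asymm hyz hzw).elim

/-! #### von Neumann ordinals -/

noncomputable def VN (o : Ord0) : ZFS :=
  ZFSet.range (fun i : o.ToType =>
    VN ((@Ordinal.typein o.ToType (· < ·) isWellOrder_lt).toRelEmbedding i))
termination_by o
decreasing_by exact Ordinal.typein_lt_self i

lemma mem_VN_of_lt : ∀ {o β : Ord0}, β < o → VN β ∈ VN o := by
  intro o β h
  rw [VN, ZFSet.mem_range]
  have h2 : β < @Ordinal.type o.ToType (· < ·) isWellOrder_lt := by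
    rwa [Ordinal.type_toType]
  obtain ⟨i, hi⟩ := @Ordinal.typein_surj o.ToType (· < ·) isWellOrder_lt β h2
  exact ⟨i, congrArg VN hi⟩

lemma mem_VN {o : Ord0} {z : ZFS} : z ∈ VN o ↔ ∃ β < o, z = VN β := by
  constructor
  · intro h
    rw [VN, ZFSet.mem_range] at h
    obtain ⟨i, hi⟩ := h
    exact ⟨_, Ordinal.typein_lt_self i, hi.symm⟩
  · rintro ⟨β, hβ, rfl⟩
    exact mem_VN_of_lt hβ

lemma rank_VN : ∀ o : Ord0, ZFSet.rank (VN o) = o := by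
  intro o
  induction o using Ordinal.induction with
  | _ o IH =>
    apply le_antisymm
    · rw [ZFSet.rank_le_iff]
      intro y hy
      rw [mem_VN] at hy
      obtain ⟨β, hβ, rfl⟩ := hy
      rw [IH β hβ]; exact hβ
    · by_contra hlt
      push_neg at hlt
      have h2 := ZFSet.rank_lt_of_mem (mem_VN_of_lt hlt)
      rw [IH _ hlt] at h2
      exact lt_irrefl _ h2

lemma isOrdinal_VN (o : Ord0) : (VN o).IsOrdinal := by
  induction o using Ordinal.induction with
  | _ o IH =>
    constructor
    · intro y hy
      rw [mem_VN] at hy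
      obtain ⟨β, hβ, rfl⟩ := hy
      intro z hz
      rw [mem_VN] at hz
      obtain ⟨η, hη, rfl⟩ := hz
      exact mem_VN_of_lt (hη.trans hβ)
    · intro y z w hyz hzw hw
      rw [mem_VN] at hw
      obtain ⟨β, hβ, rfl⟩ := hw
      rw [mem_VN] at hzw
      obtain ⟨η, hη, rfl⟩ := hzw
      rw [mem_VN] at hyz
      obtain ⟨μ, hμ, rfl⟩ := hyz
      exact mem_VN_of_lt (hμ.trans hη)

lemma mem_VN_of_ord {z : ZFS} {o : Ord0} (hz : z.IsOrdinal) (hr : z.rank < o) :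
    z ∈ VN o := by
  rcases ord_trichotomy z (VN o) hz (isOrdinal_VN o) with h | h | h
  · exact h
  · rw [h, rank_VN] at hr; exact absurd hr (lt_irrefl o)
  · have := ZFSet.rank_lt_of_mem h
    rw [rank_VN] at this
    exact absurd (this.trans hr) (lt_irrefl _)

/-! #### Basic facts about `Lv` -/

lemma Lv_zero : Lv 0 = (∅ : Set ZFS) := by
  unfold Lv
  rw [Ordinal.limitRecOn_zero]

lemma Lv_succ (α : Ord0) : Lv (Order.succ α) = defSub (Lv α) := by
  unfold Lv
  rw [Ordinal.limitRecOn_succ]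

lemma mem_Lv_limit {α : Ord0} (h : Order.IsSuccLimit α) {x : ZFS} :
    x ∈ Lv α ↔ ∃ β, ∃ _ : β < α, x ∈ Lv β := by
  unfold Lv
  rw [Ordinal.limitRecOn_limit _ _ _ _ h]
  rfl

/-! #### Formulas -/

lemma relMap_adj (A : Set ZFS) (v : Fin 2 → ↥A) :
    (structC A).RelMap .adj v ↔ (v 0).1 ∈ (v 1).1 := Iff.rfl

/-- The membership formula with two free variables. -/
def memF : Fml 2 := Language.adj.formula₂ (Term.var 0) (Term.var 1)

lemma frealize_memF {A : Set ZFS} (v : Fin 2 → ↥A) :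
    FRealize A memF v ↔ (v 0).1 ∈ (v 1).1 := by
  letI := structC A
  unfold FRealize memF
  rw [Formula.realize_rel₂]
  show (structC A).RelMap .adj ![_, _] ↔ _
  rw [relMap_adj]
  simp [Term.realize_var]

/-- Generic membership formula between two variables. -/
def memV {n : ℕ} (a b : Fin n) : Fml n := Language.adj.formula₂ (Term.var a) (Term.var b)

/-- Generic equality formula between two variables. -/
def eqV {n : ℕ} (a b : Fin n) : Fml n := Term.equal (Term.var a) (Term.var b)

section Wrap

variable {A : Set ZFS}

lemma frealize_congr {n : ℕ} (φ : Fml n) {v w : Fin n → ↥A} (h : ∀ a, v a = w a) :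
    FRealize A φ v ↔ FRealize A φ w := by rw [show v = w from funext h]

lemma frealize_inf {n : ℕ} {φ ψ : Fml n} {v : Fin n → ↥A} :
    FRealize A (φ ⊓ ψ) v ↔ FRealize A φ v ∧ FRealize A ψ v := by
  letI := structC A
  exact Formula.realize_inf

lemma frealize_imp {n : ℕ} {φ ψ : Fml n} {v : Fin n → ↥A} :
    FRealize A (φ.imp ψ) v ↔ (FRealize A φ v → FRealize A ψ v) := by
  letI := structC A
  unfold FRealize Formula.Realize
  exact BoundedFormula.realize_imp

lemma frealize_sup {n : ℕ} {φ ψ : Fml n} {v : Fin n → ↥A} :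
    FRealize A (φ ⊔ ψ) v ↔ FRealize A φ v ∨ FRealize A ψ v := by
  letI := structC A
  unfold FRealize Formula.Realize
  exact BoundedFormula.realize_sup

lemma frealize_relabel {m n : ℕ} {φ : Fml m} {g : Fin m → Fin n} {v : Fin n → ↥A} :
    FRealize A (φ.relabel g) v ↔ FRealize A φ (v ∘ g) := by
  letI := structC A
  exact Formula.realize_relabel

lemma frealize_memV {n : ℕ} (a b : Fin n) (v : Fin n → ↥A) :
    FRealize A (memV a b) v ↔ (v a).1 ∈ (v b).1 := by
  letI := structC A
  unfold FRealize memV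
  rw [Formula.realize_rel₂]
  rw [relMap_adj]
  exact Iff.rfl

lemma frealize_eqV {n : ℕ} (a b : Fin n) (v : Fin n → ↥A) :
    FRealize A (eqV a b) v ↔ v a = v b := by
  letI := structC A
  unfold FRealize eqV
  rw [Formula.realize_equal]
  exact Iff.rfl

lemma frealize_iAlls {m n k : ℕ} {φ : Fml m} {f : Fin m → Fin n ⊕ Fin k}
    {v : Fin n → ↥A} :
    FRealize A ((φ.relabel f).iAlls (Fin k)) v ↔
      ∀ i : Fin k → ↥A, FRealize A φ (fun a => Sum.elim v i (f a)) := by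
  letI := structC A
  unfold FRealize
  rw [Formula.realize_iAlls]
  exact forall_congr' fun i => Formula.realize_relabel

end Wrap

/-- The formula asserting that the free variable is an ordinal:
transitive and ∈-trichotomous on its members. -/
noncomputable def ordF : Fml 1 :=
  (Formula.iAlls (Fin 2) ((((memV 1 0) ⊓ (memV 2 1)).imp (memV 2 0)).relabel
    (![Sum.inl 0, Sum.inr 0, Sum.inr 1] : Fin 3 → Fin 1 ⊕ Fin 2))) ⊓
  (Formula.iAlls (Fin 2) ((((memV 1 0) ⊓ (memV 2 0)).imp ((memV 1 2 ⊔ memV 2 1) ⊔ eqV 1 2)).relabel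
    (![Sum.inl 0, Sum.inr 0, Sum.inr 1] : Fin 3 → Fin 1 ⊕ Fin 2)))

lemma frealize_ordF {A : Set ZFS} (hA : TransC A) (v : Fin 1 → ↥A) :
    FRealize A ordF v ↔ ((v 0 : ZFS)).IsOrdinal := by
  rw [isOrdinal_iff']
  unfold ordF
  rw [frealize_inf, frealize_iAlls, frealize_iAlls]
  constructor
  · rintro ⟨h1, h2⟩
    constructor
    · intro y hy z hz
      have hyA : y ∈ A := hA _ (v 0).2 y hy
      have hzA : z ∈ A := hA _ hyA z hz
      have h := h1 ![⟨y, hyA⟩, ⟨z, hzA⟩]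
      rw [frealize_imp, frealize_inf, frealize_memV, frealize_memV, frealize_memV] at h
      exact h ⟨hy, hz⟩
    · intro y hy z hz
      have hyA : y ∈ A := hA _ (v 0).2 y hy
      have hzA : z ∈ A := hA _ (v 0).2 z hz
      have h := h2 ![⟨y, hyA⟩, ⟨z, hzA⟩]
      rw [frealize_imp, frealize_inf, frealize_sup, frealize_sup,
        frealize_memV, frealize_memV, frealize_memV, frealize_memV, frealize_eqV] at h
      rcases h ⟨hy, hz⟩ with (h' | h') | h'
      · exact Or.inl h'
      · exact Or.inr (Or.inl h')
      · exact Or.inr (Or.inr (congrArg Subtype.val h'))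
  · rintro ⟨htr, htri⟩
    constructor
    · intro i
      rw [frealize_imp, frealize_inf, frealize_memV, frealize_memV, frealize_memV]
      rintro ⟨h1, h2⟩
      exact htr _ h1 h2
    · intro i
      rw [frealize_imp, frealize_inf, frealize_sup, frealize_sup,
        frealize_memV, frealize_memV, frealize_memV, frealize_memV, frealize_eqV]
      rintro ⟨h1, h2⟩
      rcases htri _ h1 _ h2 with h' | h' | h'
      · exact Or.inl (Or.inl h')
      · exact Or.inl (Or.inr h')
      · exact Or.inr (Subtype.ext h')

/-! #### Transitivity, monotonicity and rank bounds for `Lv` -/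

lemma Lv_trans_mono : ∀ α : Ord0, TransC (Lv α) ∧ (∀ β ≤ α, Lv β ⊆ Lv α) := by
  intro α
  induction α using Ordinal.induction with
  | _ α IH =>
    rcases Ordinal.zero_or_succ_or_isSuccLimit α with h0 | ⟨β, rfl⟩ | hlim
    · subst h0
      constructor
      · intro x hx; rw [Lv_zero] at hx; exact absurd hx (Set.notMem_empty x)
      · intro β hβ
        obtain rfl : β = 0 := le_antisymm hβ (zero_le (a := β))
        exact subset_rfl
    · have hβlt : β < Order.succ β := Order.lt_succ β
      have hstep : Lv β ⊆ Lv (Order.succ β) := by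
        rw [Lv_succ]
        intro x hx
        refine ⟨fun z hz => (IH β hβlt).1 x hx z hz,
          1, memF, Fin.cons ⟨x, hx⟩ Fin.elim0, fun z => ?_⟩
        constructor
        · intro hzx
          have hz : z ∈ Lv β := (IH β hβlt).1 x hx z hzx
          refine ⟨hz, (frealize_memF _).mpr ?_⟩
          simpa using hzx
        · rintro ⟨hz, hr⟩
          have := (frealize_memF _).mp hr
          simpa using this
      constructor
      · intro x hx z hz
        rw [Lv_succ] at hx
        exact hstep (hx.1 z hz)
      · intro β' hβ'
        rcases eq_or_lt_of_le hβ' with rfl | h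
        · exact subset_rfl
        · exact ((IH β hβlt).2 β' (Order.lt_succ_iff.mp h)).trans hstep
    · constructor
      · intro x hx z hz
        rw [mem_Lv_limit hlim] at hx
        obtain ⟨β, hβ, hx⟩ := hx
        exact (mem_Lv_limit hlim).mpr ⟨β, hβ, (IH β hβ).1 x hx z hz⟩
      · intro β hβ x hx
        rcases eq_or_lt_of_le hβ with rfl | h
        · exact hx
        · exact (mem_Lv_limit hlim).mpr ⟨β, h, hx⟩

lemma rank_lt_of_mem_Lv : ∀ α : Ord0, ∀ x : ZFS, x ∈ Lv α → ZFSet.rank x < α := by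
  intro α
  induction α using Ordinal.induction with
  | _ α IH =>
    intro x hx
    rcases Ordinal.zero_or_succ_or_isSuccLimit α with h0 | ⟨β, rfl⟩ | hlim
    · subst h0; rw [Lv_zero] at hx; exact absurd hx (Set.notMem_empty x)
    · rw [Lv_succ] at hx
      have h1 : ZFSet.rank x ≤ β := by
        rw [ZFSet.rank_le_iff]
        intro y hy
        exact IH β (Order.lt_succ β) y (hx.1 y hy)
      exact h1.trans_lt (Order.lt_succ β)
    · rw [mem_Lv_limit hlim] at hx
      obtain ⟨β, hβ, hx⟩ := hx
      exact (IH β hβ x hx).trans hβ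

lemma VN_mem_Lv : ∀ ξ : Ord0, ∀ α : Ord0, ξ < α → VN ξ ∈ Lv α := by
  intro ξ
  induction ξ using Ordinal.induction with
  | _ ξ IH =>
    intro α hξα
    have hsucc : VN ξ ∈ Lv (Order.succ ξ) := by
      rw [Lv_succ]
      refine ⟨?_, 0, ordF, Fin.elim0, fun z => ?_⟩
      · intro z hz
        rw [mem_VN] at hz
        obtain ⟨β, hβ, rfl⟩ := hz
        exact IH β hβ ξ hβ
      · constructor
        · intro hz
          obtain ⟨β, hβ, rfl⟩ := mem_VN.mp hz
          have hzL : VN β ∈ Lv ξ := IH β hβ ξ hβ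
          refine ⟨hzL, (frealize_ordF (Lv_trans_mono ξ).1 _).mpr ?_⟩
          simpa using isOrdinal_VN β
        · rintro ⟨hzL, hreal⟩
          have hzo : z.IsOrdinal := by
            simpa using (frealize_ordF (Lv_trans_mono ξ).1 _).mp hreal
          exact mem_VN_of_ord hzo (rank_lt_of_mem_Lv ξ z hzL)
    exact (Lv_trans_mono α).2 (Order.succ ξ) (Order.succ_le_of_lt hξα) hsucc

/-! #### Sentences for the transfer argument -/

lemma vec1_eq {X : Type*} (i : Fin 1 → X) : i = ![i 0] := by
  funext a; fin_cases a; simp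

noncomputable def exSent (χ : Fml 1) : Sent :=
  (χ.relabel (Sum.inr : Fin 1 → Empty ⊕ Fin 1)).iExs (Fin 1)

noncomputable def exSent2 (χ : Fml 2) : Sent :=
  (χ.relabel (Sum.inr : Fin 2 → Empty ⊕ Fin 2)).iExs (Fin 2)

lemma satC_exSent {A : Set ZFS} {χ : Fml 1} :
    SatC A (exSent χ) ↔ ∃ w : ↥A, FRealize A χ ![w] := by
  letI := structC A
  unfold SatC Sentence.Realize exSent FRealize
  rw [Formula.realize_iExs]
  simp only [Formula.realize_relabel, Sum.elim_comp_inr]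
  constructor
  · rintro ⟨i, hi⟩
    refine ⟨i 0, ?_⟩
    rw [← vec1_eq i]
    exact hi
  · rintro ⟨w, hw⟩
    exact ⟨![w], hw⟩

lemma satC_exSent2 {A : Set ZFS} {χ : Fml 2} :
    SatC A (exSent2 χ) ↔ ∃ i : Fin 2 → ↥A, FRealize A χ i := by
  letI := structC A
  unfold SatC Sentence.Realize exSent2 FRealize
  rw [Formula.realize_iExs]
  simp only [Formula.realize_relabel]
  exact ⟨fun ⟨i, hi⟩ => ⟨i, hi⟩, fun ⟨i, hi⟩ => ⟨i, hi⟩⟩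

noncomputable def uniqF (φ : Fml 1) : Fml 1 :=
  φ ⊓ (Formula.iAlls (Fin 1) (((φ.relabel (fun _ => (1 : Fin 2))).imp (eqV 1 0)).relabel
        (![Sum.inl 0, Sum.inr 0] : Fin 2 → Fin 1 ⊕ Fin 1)))

lemma frealize_uniqF {A : Set ZFS} {φ : Fml 1} (v : Fin 1 → ↥A) :
    FRealize A (uniqF φ) v ↔
      (FRealize A φ v ∧ ∀ w : ↥A, FRealize A φ ![w] → w = v 0) := by
  unfold uniqF
  rw [frealize_inf, frealize_iAlls]
  refine and_congr Iff.rfl ?_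
  constructor
  · intro h2 w hw
    have h := h2 ![w]
    rw [frealize_imp, frealize_relabel, frealize_eqV] at h
    exact h ((frealize_congr φ (fun a => by fin_cases a <;> rfl)).mp hw)
  · intro h2 i
    rw [frealize_imp, frealize_relabel, frealize_eqV]
    intro hφ
    exact h2 (i 0) ((frealize_congr φ (fun a => by fin_cases a <;> rfl)).mp hφ)

noncomputable def uniqSent (φ : Fml 1) : Sent := exSent (uniqF φ)

lemma satC_uniqSent {A : Set ZFS} {φ : Fml 1} :
    SatC A (uniqSent φ) ↔ ∃ w : ↥A, FRealize A φ ![w] ∧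
      ∀ w' : ↥A, FRealize A φ ![w'] → w' = w := by
  rw [uniqSent, satC_exSent]
  constructor
  · rintro ⟨w, hw⟩
    rw [frealize_uniqF] at hw
    refine ⟨w, hw.1, fun w' hw' => ?_⟩
    have := hw.2 w' hw'
    simpa using this
  · rintro ⟨w, hw1, hw2⟩
    refine ⟨w, ?_⟩
    rw [frealize_uniqF]
    constructor
    · exact hw1
    · intro w' hw'
      simpa using hw2 w' hw'

noncomputable def memSent (φ ψ : Fml 1) : Sent :=
  exSent2 ((φ.relabel (fun _ => (0 : Fin 2))) ⊓ (ψ.relabel (fun _ => (1 : Fin 2))) ⊓ memV 0 1)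

lemma satC_memSent {A : Set ZFS} {φ ψ : Fml 1} :
    SatC A (memSent φ ψ) ↔ ∃ u v : ↥A,
      FRealize A φ ![u] ∧ FRealize A ψ ![v] ∧ u.1 ∈ v.1 := by
  rw [memSent, satC_exSent2]
  constructor
  · rintro ⟨i, hi⟩
    rw [frealize_inf, frealize_inf, frealize_relabel, frealize_relabel,
      frealize_memV] at hi
    obtain ⟨⟨h1, h2⟩, h3⟩ := hi
    refine ⟨i 0, i 1, ?_, ?_, h3⟩
    · exact (frealize_congr φ (fun a => by fin_cases a <;> rfl)).mp h1
    · exact (frealize_congr ψ (fun a => by fin_cases a <;> rfl)).mp h2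
  · rintro ⟨u, v, h1, h2, h3⟩
    refine ⟨![u, v], ?_⟩
    rw [frealize_inf, frealize_inf, frealize_relabel, frealize_relabel,
      frealize_memV]
    refine ⟨⟨?_, ?_⟩, h3⟩
    · exact (frealize_congr φ (fun a => by fin_cases a <;> rfl)).mp h1
    · exact (frealize_congr ψ (fun a => by fin_cases a <;> rfl)).mp h2

end Aux

/-- suppose `M` is a transitive model of `ATR₀^set` + `V=L` + `Th(L_γ)`, where
every element of `L_γ` is parameter-free definable in `L_γ` (and `γ` is a locally countable
limit of admissibles, so that `L_γ` models `ATR₀^set`).  The hypothesis that `M ⊨ V=L` is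
rendered semantically: `M` is a level of `L`.  Then `M = L_δ` for some `δ ≥ γ`. -/
theorem transitive_model_of_theory_of_L_level (γ : Ord0)
    (hγadm : LimitOfAdmissibles γ) (hγctbl : LocCtbl γ)
    (hpd : PointwiseDefinable (Lv γ))
    (M : ZFS) (hMtrans : M.IsTransitive)
    (hVL : ∃ δ : Ord0, M.toSet = Lv δ)
    (hTh : ∀ σ : Sent, SatC (Lv γ) σ → SatZ M σ) :
    ∃ δ : Ord0, γ ≤ δ ∧ M.toSet = Lv δ := by
  classical
  obtain ⟨δ, hδ⟩ := hVL
  refine ⟨δ, ?_, hδ⟩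
  have hγt : TransC (Lv γ) := (Lv_trans_mono γ).1
  choose φd hφd using hpd
  -- transfer: each element of `L_γ` has a unique counterpart in `M`
  have hj : ∀ x : ↥(Lv γ), ∃ w : ↥M.toSet, FRealize M.toSet (φd x) ![w] ∧
      ∀ w' : ↥M.toSet, FRealize M.toSet (φd x) ![w'] → w' = w := by
    intro x
    have h1 : SatC (Lv γ) (uniqSent (φd x)) := by
      rw [satC_uniqSent]
      exact ⟨x, (hφd x x).mpr rfl, fun w' hw' => (hφd x w').mp hw'⟩
    have h2 : SatC M.toSet (uniqSent (φd x)) := hTh _ h1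
    rwa [satC_uniqSent] at h2
  choose j hj1 hj2 using hj
  -- membership is preserved
  have hmem : ∀ x y : ↥(Lv γ), x.1 ∈ y.1 → (j x).1 ∈ (j y).1 := by
    intro x y hxy
    have h1 : SatC (Lv γ) (memSent (φd x) (φd y)) :=
      (satC_memSent).mpr ⟨x, y, (hφd x x).mpr rfl, (hφd y y).mpr rfl, hxy⟩
    have h2 : SatC M.toSet (memSent (φd x) (φd y)) := hTh _ h1
    rw [satC_memSent] at h2
    obtain ⟨u, v, hu, hv, huv⟩ := h2
    rwa [hj2 x u hu, hj2 y v hv] at huv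
  -- the induced ordinal map
  have hVNmem : ∀ ξ : Ord0, ξ < γ → VN ξ ∈ Lv γ := fun ξ h => VN_mem_Lv ξ γ h
  let F : ∀ ξ : Ord0, ξ < γ → Ord0 := fun ξ h => ZFSet.rank (j ⟨VN ξ, hVNmem ξ h⟩).1
  have hFmono : ∀ ξ η (hξ : ξ < γ) (hη : η < γ), ξ < η → F ξ hξ < F η hη := by
    intro ξ η hξ hη hlt
    exact ZFSet.rank_lt_of_mem (hmem _ _ (mem_VN_of_lt hlt))
  have hFlt : ∀ ξ (hξ : ξ < γ), F ξ hξ < δ := by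
    intro ξ hξ
    have hmem' : (j ⟨VN ξ, hVNmem ξ hξ⟩).1 ∈ Lv δ := hδ ▸ (j ⟨VN ξ, hVNmem ξ hξ⟩).2
    exact rank_lt_of_mem_Lv δ _ hmem'
  have hFge : ∀ ξ, ∀ hξ : ξ < γ, ξ ≤ F ξ hξ := by
    intro ξ
    induction ξ using Ordinal.induction with
    | _ ξ IH =>
      intro hξ
      by_contra hc
      push_neg at hc
      have h1 := IH _ hc (hc.trans hξ)
      have h2 := hFmono _ _ (hc.trans hξ) hξ hc
      exact absurd (h1.trans_lt h2) (lt_irrefl _)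
  by_contra hc
  push_neg at hc
  exact absurd ((hFge δ hc).trans_lt (hFlt δ hc)) (lt_irrefl δ)

end BetaRank
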